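/- Let X be a topological space decomposed as X = A₁ ∪ A₂ with A₁, A₂, and A₁ ∩ A₂ open and path-connected, and suppose the inclusion-induced maps j_k : π₁(A₁ ∩ A₂) → π₁(A_k) are both surjective (k = 1, 2). Then π₁(X) is isomorphic to π₁(A₁) / j₁(ker j₂). -/

import Mathlib

open CategoryTheory FundamentalGroupoid
open scoped FundamentalGroupoid unitInterval

/-- The homomorphism on fundamental groups induced by a continuous map. -/
noncomputable def FundamentalGroup.inducedHom {E B : Type} [TopologicalSpace E]
    [TopologicalSpace B] (p : C(E, B)) (e : E) :
    FundamentalGroup E e →* FundamentalGroup B (p e) :=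
  CategoryTheory.Functor.mapEnd (FundamentalGroupoid.mk e)
    (show FundamentalGroupoid E ⥤ FundamentalGroupoid B from
      πₘ (show TopCat.of E ⟶ TopCat.of B from TopCat.ofHom p))

attribute [local instance] Path.Homotopic.setoid

noncomputable section
universe u
variable {Z W : Type u} [TopologicalSpace Z] [TopologicalSpace W]

namespace VK

def affCM (a b : I) : C(I, I) where
  toFun s := ⟨(1 - (s:ℝ)) * a + s * b, by
    constructor
    · nlinarith [s.2.1, s.2.2, a.2.1, a.2.2, b.2.1, b.2.2]
    · nlinarith [s.2.1, s.2.2, a.2.1, a.2.2, b.2.1, b.2.2]⟩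
  continuous_toFun := by
    apply Continuous.subtype_mk
    fun_prop

@[simp] lemma affCM_zero (a b : I) : affCM a b 0 = a := by
  apply Subtype.ext; simp [affCM]

@[simp] lemma affCM_one (a b : I) : affCM a b 1 = b := by
  apply Subtype.ext; simp [affCM]

@[simp] lemma affCM_self (a : I) (s : I) : affCM a a s = a := by
  apply Subtype.ext; simp [affCM]; ring

@[simp] lemma affCM_zero_one (s : I) : affCM 0 1 s = s := by
  apply Subtype.ext
  show (1 - (s:ℝ)) * ((0:I):ℝ) + s * ((1:I):ℝ) = s
  norm_num

lemma affCM_mem_Icc {a b : I} (h : a ≤ b) (s : I) : affCM a b s ∈ Set.Icc a b := by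
  constructor
  · rw [← Subtype.coe_le_coe]
    show (a:ℝ) ≤ (1 - (s:ℝ)) * a + s * b
    nlinarith [s.2.1, s.2.2, Subtype.coe_le_coe.2 h]
  · rw [← Subtype.coe_le_coe]
    show (1 - (s:ℝ)) * a + s * b ≤ (b:ℝ)
    nlinarith [s.2.1, s.2.2, Subtype.coe_le_coe.2 h]

/-- the affine path in `I` from `a` to `b` -/
def pAff (a b : I) : Path a b where
  toContinuousMap := affCM a b
  source' := affCM_zero a b
  target' := affCM_one a b

@[simp] lemma pAff_apply (a b s : I) : pAff a b s = affCM a b s := rfl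

def paramPath (g : C(I, Z)) (φ : C(I, I)) {u v : Z} (hu : g (φ 0) = u) (hv : g (φ 1) = v) :
    Path u v where
  toContinuousMap := g.comp φ
  source' := hu
  target' := hv

@[simp] lemma paramPath_apply (g : C(I, Z)) (φ : C(I, I)) {u v : Z} (hu : g (φ 0) = u)
    (hv : g (φ 1) = v) (s : I) : paramPath g φ hu hv s = g (φ s) := rfl

lemma paramPath_homotopic (g : C(I, Z)) (φ ψ : C(I, I)) (h0 : φ 0 = ψ 0) (h1 : φ 1 = ψ 1)
    {u v : Z} (hu : g (φ 0) = u) (hv : g (φ 1) = v) (hu' : g (ψ 0) = u) (hv' : g (ψ 1) = v) :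
    (paramPath g φ hu hv).Homotopic (paramPath g ψ hu' hv') := by
  refine ⟨⟨⟨⟨fun p => g (affCM (φ p.2) (ψ p.2) p.1), ?_⟩, ?_, ?_⟩, ?_⟩⟩
  · apply g.continuous.comp
    apply Continuous.subtype_mk
    have c1 : Continuous fun p : I × I => ((φ p.2 : I) : ℝ) :=
      continuous_subtype_val.comp (φ.continuous.comp continuous_snd)
    have c2 : Continuous fun p : I × I => ((ψ p.2 : I) : ℝ) :=
      continuous_subtype_val.comp (ψ.continuous.comp continuous_snd)
    have c3 : Continuous fun p : I × I => ((p.1 : I) : ℝ) :=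
      continuous_subtype_val.comp continuous_fst
    fun_prop
  · intro s; simp
  · intro s; simp
  · intro t s hs
    simp only [Set.mem_insert_iff, Set.mem_singleton_iff] at hs
    rcases hs with rfl | rfl
    · show g (affCM (φ 0) (ψ 0) t) = (paramPath g φ hu hv) 0
      rw [← h0, affCM_self]; rfl
    · show g (affCM (φ 1) (ψ 1) t) = (paramPath g φ hu hv) 1
      rw [← h1, affCM_self]; rfl

/-- affine subpath of a continuous map on `I`, with adjustable endpoints -/
def cPath (g : C(I, Z)) (a b : I) {u v : Z} (hu : g a = u) (hv : g b = v) : Path u v :=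
  paramPath g (affCM a b) (by rwa [affCM_zero]) (by rwa [affCM_one])

@[simp] lemma cPath_apply (g : C(I, Z)) (a b : I) {u v : Z} (hu : g a = u) (hv : g b = v)
    (s : I) : cPath g a b hu hv s = g (affCM a b s) := rfl

lemma cPath_splice (g : C(I, Z)) (a b c : I) {u v w : Z} (hu : g a = u) (hv : g b = v)
    (hw : g c = w) :
    ((cPath g a b hu hv).trans (cPath g b c hv hw)).Homotopic (cPath g a c hu hw) := by
  have h1 : (cPath g a b hu hv).trans (cPath g b c hv hw) =
      paramPath g ((pAff a b).trans (pAff b c)).toContinuousMap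
        (by simp [Path.source]; exact hu) (by simp [Path.target]; exact hw) := by
    ext s
    rw [show (paramPath g ((pAff a b).trans (pAff b c)).toContinuousMap _ _) s
        = g (((pAff a b).trans (pAff b c)) s) from rfl]
    simp only [Path.trans_apply, cPath_apply, pAff_apply]
    split_ifs <;> rfl
  rw [h1]
  apply paramPath_homotopic
  · simp
  · simp

lemma cPath_const (g : C(I, Z)) (a : I) {u : Z} (hu : g a = u) (hu' : g a = u) :
    (cPath g a a hu hu').Homotopic (Path.refl u) := by
  have h1 : (Path.refl u : Path u u) =
      paramPath g (ContinuousMap.const I a) hu hu := by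
    ext s; exact hu.symm
  rw [h1]
  apply paramPath_homotopic <;> simp

/-- corestriction of a path to a subset, with adjustable endpoints -/
def intoSet {x y : Z} (p : Path x y) {S : Set Z} (hp : ∀ t, p t ∈ S) {u v : S}
    (hu : (u : Z) = x) (hv : (v : Z) = y) : Path u v where
  toFun t := ⟨p t, hp t⟩
  continuous_toFun := by
    apply Continuous.subtype_mk
    exact p.continuous
  source' := by apply Subtype.ext; simp [hu]
  target' := by apply Subtype.ext; simp [hv]

@[simp] lemma intoSet_apply {x y : Z} (p : Path x y) {S : Set Z} (hp : ∀ t, p t ∈ S) {u v : S}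
    (hu : (u : Z) = x) (hv : (v : Z) = y) (t : I) : (intoSet p hp hu hv t : Z) = p t := rfl

/-- morphism in the fundamental groupoid induced by a path -/
def mor {x y : Z} (p : Path x y) : FundamentalGroupoid.mk x ⟶ FundamentalGroupoid.mk y := ⟦p⟧

lemma mor_trans {x y w : Z} (p : Path x y) (q : Path y w) : mor (p.trans q) = mor p ≫ mor q :=
  Path.Homotopic.Quotient.mk_trans p q

lemma mor_refl {z : Z} : mor (Path.refl z) = 𝟙 (FundamentalGroupoid.mk z) := rfl

lemma mor_eq_of_homotopic {x y : Z} {p q : Path x y} (h : p.Homotopic q) : mor p = mor q :=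
  Quotient.sound h

lemma mor_trans_symm {x y : Z} (p : Path x y) : mor (p.trans p.symm) = 𝟙 _ := by
  rw [show (𝟙 (FundamentalGroupoid.mk x) : _) = mor (Path.refl x) from rfl]
  exact mor_eq_of_homotopic ⟨(Path.Homotopy.reflTransSymm p).symm⟩

lemma mor_symm_trans {x y : Z} (p : Path x y) : mor (p.symm.trans p) = 𝟙 _ := by
  rw [show (𝟙 (FundamentalGroupoid.mk y) : _) = mor (Path.refl y) from rfl]
  exact mor_eq_of_homotopic ⟨(Path.Homotopy.reflSymmTrans p).symm⟩

instance mor_isIso {x y : Z} (p : Path x y) : IsIso (mor p) :=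
  ⟨mor p.symm, by rw [← mor_trans, mor_trans_symm], by rw [← mor_trans, mor_symm_trans]⟩

lemma mor_symm {x y : Z} (p : Path x y) : mor p.symm = inv (mor p) := by
  apply IsIso.eq_inv_of_hom_inv_id
  rw [← mor_trans, mor_trans_symm]

/-- class of a loop as element of the fundamental group -/
def Om {z : Z} (p : Path z z) : FundamentalGroup Z z := mor p

lemma Om_hom {z : Z} (p : Path z z) : Om p = mor p := rfl

lemma Aut_ext {C : Type*} [Groupoid C] {x : C} {a b : End x} (h : a = b) : a = b :=
  h

lemma Om_trans {z : Z} (p q : Path z z) : Om (p.trans q) = Om q * Om p :=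
  Aut_ext (mor_trans p q)

lemma Om_refl {z : Z} : (Om (Path.refl z)) = 1 := Aut_ext (by exact mor_refl)

lemma Om_eq_iff {z : Z} {p q : Path z z} : Om p = Om q ↔ mor p = mor q :=
  ⟨fun h => h, fun h => Aut_ext h⟩

lemma Om_eq_of_homotopic {z : Z} {p q : Path z z} (h : p.Homotopic q) : Om p = Om q :=
  Aut_ext (mor_eq_of_homotopic h)

lemma Om_surjective {z : Z} (a : FundamentalGroup Z z) : ∃ p : Path z z, Om p = a := by
  obtain ⟨p, hp⟩ := Quotient.exists_rep (a : Path.Homotopic.Quotient z z)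
  exact ⟨p, Aut_ext hp⟩

lemma Om_const {z : Z} {p : Path z z} (h : ∀ s, p s = z) : Om p = 1 := by
  rw [show p = Path.refl z from Path.ext (funext h), Om_refl]

/-- key conjugation-splitting identity -/
lemma mor_conj {x u v w : Z} (c : Path x u) (e : Path u v) (d : Path x v) (f : Path v w)
    (k : Path x w) :
    mor ((c.trans (e.trans d.symm)).trans (d.trans (f.trans k.symm))) =
      mor (c.trans ((e.trans f).trans k.symm)) := by
  simp only [mor_trans, mor_symm, Category.assoc, IsIso.inv_hom_id_assoc]

/-- decomposition of `Om` along an intermediate path -/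
lemma Om_split {z u : Z} (p : Path z z) (a : Path z u) (b : Path u z)
    (h : mor p = mor a ≫ mor b) : Om p = Om (a.trans b) := by
  apply Aut_ext
  rw [Om_hom, Om_hom, mor_trans, h]

section master

variable {z₀ : Z}

/-- the `m`-th piece of a subdivided loop, conjugated back to the basepoint -/
def pieceLoop (p : Path z₀ z₀) (t : ℕ → I) (d : ∀ m : ℕ, Path z₀ (p (t m))) (m : ℕ) :
    Path z₀ z₀ :=
  (d m).trans ((cPath p.toContinuousMap (t m) (t (m+1)) rfl rfl).trans (d (m+1)).symm)

/-- master decomposition of a loop along a partition of `I` -/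
lemma Om_eq_prod_pieces (p : Path z₀ z₀) (t : ℕ → I) (N : ℕ) (ht0 : t 0 = 0) (htN : t N = 1)
    (d : ∀ m : ℕ, Path z₀ (p (t m))) (hd0 : ∀ s, d 0 s = z₀) (hdN : ∀ s, d N s = z₀) :
    Om p = (((List.range N).map (fun m => Om (pieceLoop p t d m))).reverse).prod := by
  have hz : p.toContinuousMap (t 0) = z₀ := by rw [ht0]; exact p.source
  set L : ℕ → Path z₀ z₀ := fun n =>
    (cPath p.toContinuousMap (t 0) (t n) hz rfl).trans (d n).symm with hL
  have key : ∀ n, Om (L n) = (((List.range n).map (fun m => Om (pieceLoop p t d m))).reverse).prod := by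
    intro n
    induction n with
    | zero =>
      simp only [List.range_zero, List.map_nil, List.reverse_nil, List.prod_nil]
      apply Om_const
      intro s
      rw [hL]
      simp only [Path.trans_apply]
      split_ifs
      · show p.toContinuousMap (affCM (t 0) (t 0) _) = z₀
        rw [affCM_self]; exact hz
      · show (d 0).symm _ = z₀
        rw [Path.symm_apply]; exact hd0 _
    | succ n ih =>
      have hmor : mor (L (n+1)) = mor (L n) ≫ mor (pieceLoop p t d n) := by
        have hsplice : mor (cPath p.toContinuousMap (t 0) (t (n+1)) hz rfl) =
            mor (cPath p.toContinuousMap (t 0) (t n) hz rfl) ≫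
            mor (cPath p.toContinuousMap (t n) (t (n+1)) rfl rfl) := by
          rw [← mor_trans]
          exact (mor_eq_of_homotopic (cPath_splice p.toContinuousMap (t 0) (t n) (t (n+1))
            hz rfl rfl)).symm
        rw [hL]
        simp only [pieceLoop, mor_trans, mor_symm, hsplice, Category.assoc,
          IsIso.inv_hom_id_assoc]
      have : Om (L (n+1)) = Om (pieceLoop p t d n) * Om (L n) := by
        apply Aut_ext
        rw [Om_hom, hmor]; rfl
      rw [this, ih, List.range_succ]
      simp
  have hfinal : L N = p.trans (Path.refl z₀) := by
    have ht0' : ((t 0 : I) : ℝ) = 0 := by rw [ht0]; rfl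
    have htN' : ((t N : I) : ℝ) = 1 := by rw [htN]; rfl
    ext s
    rw [hL]
    simp only [Path.trans_apply]
    split_ifs with h
    · show p.toContinuousMap (affCM (t 0) (t N) _) = p _
      rw [ht0, htN, affCM_zero_one]
      rfl
    · exact (hdN _).trans rfl
  have : Om p = Om (L N) := by
    rw [hfinal]
    exact Om_eq_of_homotopic ⟨(Path.Homotopy.transRefl p).symm⟩
  rw [this, key N]

end master

section square

variable {z₀ : Z}

lemma affCM_mem_Icc₂ {l r u v : I} (hu : u ∈ Set.Icc l r) (hv : v ∈ Set.Icc l r) (s : I) :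
    affCM u v s ∈ Set.Icc l r := by
  obtain ⟨hu1, hu2⟩ := hu
  obtain ⟨hv1, hv2⟩ := hv
  rw [← Subtype.coe_le_coe] at hu1 hu2 hv1 hv2
  constructor
  · rw [← Subtype.coe_le_coe]
    show (l:ℝ) ≤ (1 - (s:ℝ)) * u + s * v
    nlinarith [s.2.1, s.2.2]
  · rw [← Subtype.coe_le_coe]
    show (1 - (s:ℝ)) * u + s * v ≤ (r:ℝ)
    nlinarith [s.2.1, s.2.2]

/-- the map `s ↦ g (ta, s)` -/
def rowCM (g : C(I × I, Z)) (ta : I) : C(I, Z) :=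
  g.comp ⟨fun s => (ta, s), by fun_prop⟩

/-- the map `s ↦ g (s, sg)` -/
def colCM (g : C(I × I, Z)) (sg : I) : C(I, Z) :=
  g.comp ⟨fun s => (s, sg), by fun_prop⟩

@[simp] lemma rowCM_apply (g : C(I × I, Z)) (ta s : I) : rowCM g ta s = g (ta, s) := rfl
@[simp] lemma colCM_apply (g : C(I × I, Z)) (sg s : I) : colCM g sg s = g (s, sg) := rfl

/-- Boundary homotopy for a small square mapping into `S`:
going bottom-then-right is homotopic within `S` to going left-then-top. -/
lemma square_homotopic (g : C(I × I, Z)) (a b c d : I) (hab : a ≤ b) (hcd : c ≤ d)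
    {S : Set Z} (hS : ∀ q : I × I, q.1 ∈ Set.Icc a b → q.2 ∈ Set.Icc c d → g q ∈ S)
    {u00 u01 u10 u11 : S}
    (h00 : (u00 : Z) = g (a, c)) (h01 : (u01 : Z) = g (a, d))
    (h10 : (u10 : Z) = g (b, c)) (h11 : (u11 : Z) = g (b, d))
    (hB : ∀ s, (cPath (rowCM g a) c d rfl rfl) s ∈ S)
    (hR : ∀ s, (cPath (colCM g d) a b rfl rfl) s ∈ S)
    (hL : ∀ s, (cPath (colCM g c) a b rfl rfl) s ∈ S)
    (hT : ∀ s, (cPath (rowCM g b) c d rfl rfl) s ∈ S) :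
    ((intoSet (cPath (rowCM g a) c d rfl rfl) hB h00 h01).trans
      (intoSet (cPath (colCM g d) a b rfl rfl) hR h01 h11)).Homotopic
    ((intoSet (cPath (colCM g c) a b rfl rfl) hL h00 h10).trans
      (intoSet (cPath (rowCM g b) c d rfl rfl) hT h10 h11)) := by
  classical
  set p₁ : Path ((a, c) : I × I) ((b, d) : I × I) :=
    ((Path.refl a).prod (pAff c d)).trans ((pAff a b).prod (Path.refl d)) with hp₁
  set p₂ : Path ((a, c) : I × I) ((b, d) : I × I) :=
    ((pAff a b).prod (Path.refl c)).trans ((Path.refl b).prod (pAff c d)) with hp₂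
  have hp₁mem : ∀ s, (p₁ s).1 ∈ Set.Icc a b ∧ (p₁ s).2 ∈ Set.Icc c d := by
    intro s
    rw [hp₁]
    rw [Path.trans_apply]
    split_ifs
    · exact ⟨Set.left_mem_Icc.2 hab, affCM_mem_Icc hcd _⟩
    · exact ⟨affCM_mem_Icc hab _, Set.right_mem_Icc.2 hcd⟩
  have hp₂mem : ∀ s, (p₂ s).1 ∈ Set.Icc a b ∧ (p₂ s).2 ∈ Set.Icc c d := by
    intro s
    rw [hp₂]
    rw [Path.trans_apply]
    split_ifs
    · exact ⟨affCM_mem_Icc hab _, Set.left_mem_Icc.2 hcd⟩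
    · exact ⟨Set.right_mem_Icc.2 hab, affCM_mem_Icc hcd _⟩
  -- the interpolated point
  set P : I → I → I × I := fun ta s =>
    (affCM (p₁ s).1 (p₂ s).1 ta, affCM (p₁ s).2 (p₂ s).2 ta) with hP
  have hPmem : ∀ ta s, g (P ta s) ∈ S := by
    intro ta s
    exact hS _ (affCM_mem_Icc₂ (hp₁mem s).1 (hp₂mem s).1 ta)
      (affCM_mem_Icc₂ (hp₁mem s).2 (hp₂mem s).2 ta)
  have hpt1 : ∀ s : I, (((intoSet (cPath (rowCM g a) c d rfl rfl) hB h00 h01).trans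
      (intoSet (cPath (colCM g d) a b rfl rfl) hR h01 h11)) s : Z) = g (p₁ s) := by
    intro s
    rw [Path.trans_apply, hp₁, Path.trans_apply]
    split_ifs <;> rfl
  have hpt2 : ∀ s : I, (((intoSet (cPath (colCM g c) a b rfl rfl) hL h00 h10).trans
      (intoSet (cPath (rowCM g b) c d rfl rfl) hT h10 h11)) s : Z) = g (p₂ s) := by
    intro s
    rw [Path.trans_apply, hp₂, Path.trans_apply]
    split_ifs <;> rfl
  refine ⟨⟨⟨⟨fun q => ⟨g (P q.1 q.2), hPmem q.1 q.2⟩, ?_⟩, ?_, ?_⟩, ?_⟩⟩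
  · apply Continuous.subtype_mk
    apply g.continuous.comp
    have c₁ : Continuous fun q : I × I => ((p₁ q.2 : I × I)) :=
      p₁.continuous.comp continuous_snd
    have c₂ : Continuous fun q : I × I => ((p₂ q.2 : I × I)) :=
      p₂.continuous.comp continuous_snd
    have cfst : Continuous fun q : I × I => ((q.1 : I) : ℝ) :=
      continuous_subtype_val.comp continuous_fst
    apply Continuous.prodMk
    · apply Continuous.subtype_mk
      have c11 : Continuous fun q : I × I => (((p₁ q.2).1 : I) : ℝ) :=
        continuous_subtype_val.comp (continuous_fst.comp c₁)
      have c21 : Continuous fun q : I × I => (((p₂ q.2).1 : I) : ℝ) :=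
        continuous_subtype_val.comp (continuous_fst.comp c₂)
      show Continuous fun q : I × I =>
        (1 - ((q.1 : I) : ℝ)) * (((p₁ q.2).1 : I) : ℝ) + ((q.1 : I) : ℝ) * (((p₂ q.2).1 : I) : ℝ)
      fun_prop
    · apply Continuous.subtype_mk
      have c12 : Continuous fun q : I × I => (((p₁ q.2).2 : I) : ℝ) :=
        continuous_subtype_val.comp (continuous_snd.comp c₁)
      have c22 : Continuous fun q : I × I => (((p₂ q.2).2 : I) : ℝ) :=
        continuous_subtype_val.comp (continuous_snd.comp c₂)
      show Continuous fun q : I × I =>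
        (1 - ((q.1 : I) : ℝ)) * (((p₁ q.2).2 : I) : ℝ) + ((q.1 : I) : ℝ) * (((p₂ q.2).2 : I) : ℝ)
      fun_prop
  · intro s
    apply Subtype.ext
    show g (P 0 s) = _
    have h' : P 0 s = p₁ s := by
      rw [hP]; simp only [affCM_zero]
    rw [h']
    exact (hpt1 s).symm
  · intro s
    apply Subtype.ext
    show g (P 1 s) = _
    have h' : P 1 s = p₂ s := by
      rw [hP]; simp only [affCM_one]
    rw [h']
    exact (hpt2 s).symm
  · intro ta s hs
    simp only [Set.mem_insert_iff, Set.mem_singleton_iff] at hs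
    have hzero : ∀ ta, P ta 0 = ((a,c) : I × I) := by
      intro ta
      have h1 : p₁ 0 = ((a,c) : I × I) := p₁.source
      have h2 : p₂ 0 = ((a,c) : I × I) := p₂.source
      rw [hP]
      show (affCM (p₁ 0).1 (p₂ 0).1 ta, affCM (p₁ 0).2 (p₂ 0).2 ta) = _
      rw [h1, h2]
      simp only [affCM_self]
    have hone : ∀ ta, P ta 1 = ((b,d) : I × I) := by
      intro ta
      have h1 : p₁ 1 = ((b,d) : I × I) := p₁.target
      have h2 : p₂ 1 = ((b,d) : I × I) := p₂.target
      rw [hP]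
      show (affCM (p₁ 1).1 (p₂ 1).1 ta, affCM (p₁ 1).2 (p₂ 1).2 ta) = _
      rw [h1, h2]
      simp only [affCM_self]
    rcases hs with rfl | rfl
    · apply Subtype.ext
      show g (P ta 0) = _
      rw [hzero]
      refine Eq.trans ?_ (hpt1 0).symm
      exact congrArg g p₁.source.symm
    · apply Subtype.ext
      show g (P ta 1) = _
      rw [hone]
      refine Eq.trans ?_ (hpt1 1).symm
      exact congrArg g p₁.target.symm

end square

section misc

lemma trans_mem {x y w : Z} {S : Set Z} {p : Path x y} {q : Path y w}
    (hp : ∀ s, p s ∈ S) (hq : ∀ s, q s ∈ S) : ∀ s, (p.trans q) s ∈ S := by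
  intro s
  rw [Path.trans_apply]
  split_ifs
  · exact hp _
  · exact hq _

lemma symm_mem {x y : Z} {S : Set Z} {p : Path x y} (hp : ∀ s, p s ∈ S) :
    ∀ s, p.symm s ∈ S := fun s => hp _

lemma intoSet_trans {x y w : Z} {S : Set Z} (p : Path x y) (q : Path y w)
    (hp : ∀ s, p s ∈ S) (hq : ∀ s, q s ∈ S) {u v e : S}
    (hu : (u : Z) = x) (hv : (v : Z) = y) (he : (e : Z) = w) :
    intoSet (p.trans q) (trans_mem hp hq) hu he =
      (intoSet p hp hu hv).trans (intoSet q hq hv he) := by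
  ext s
  show ((p.trans q) s : Z) = ((((intoSet p hp hu hv).trans (intoSet q hq hv he))) s : Z)
  rw [Path.trans_apply, Path.trans_apply]
  split_ifs <;> rfl

lemma intoSet_symm {x y : Z} {S : Set Z} (p : Path x y) (hp : ∀ s, p s ∈ S) {u v : S}
    (hu : (u : Z) = x) (hv : (v : Z) = y) :
    intoSet p.symm (symm_mem hp) hv hu = (intoSet p hp hu hv).symm := by
  ext s
  rfl

/-- homotopy of two conjugated-edge compositions from homotopy of the middle parts -/
lemma conj_homotopic {x u v v' w : Z} (c : Path x u) (e : Path u v) (e' : Path u v')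
    (d : Path x v) (d' : Path x v') (f : Path v w) (f' : Path v' w) (k : Path x w)
    (h : (e.trans f).Homotopic (e'.trans f')) :
    ((c.trans (e.trans d.symm)).trans (d.trans (f.trans k.symm))).Homotopic
      ((c.trans (e'.trans d'.symm)).trans (d'.trans (f'.trans k.symm))) := by
  have hm : mor ((c.trans (e.trans d.symm)).trans (d.trans (f.trans k.symm))) =
      mor ((c.trans (e'.trans d'.symm)).trans (d'.trans (f'.trans k.symm))) := by
    rw [mor_conj, mor_conj]
    exact mor_eq_of_homotopic (Path.Homotopic.hcomp (Path.Homotopic.refl c)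
      (Path.Homotopic.hcomp h (Path.Homotopic.refl k.symm)))
  exact Quotient.exact hm

lemma telescope {G : Type*} [Group G] (M : ℕ) (f g v : ℕ → G)
    (h : ∀ m, m < M → f m = (v (m+1))⁻¹ * g m * v m) :
    ((List.range M).map f).reverse.prod =
      (v M)⁻¹ * ((List.range M).map g).reverse.prod * v 0 := by
  induction M with
  | zero => simp
  | succ M ih =>
    have hstep : ∀ (F : ℕ → G), ((List.range (M+1)).map F).reverse.prod
        = F M * ((List.range M).map F).reverse.prod := by
      intro F
      rw [List.range_succ]
      simp
    rw [hstep f, hstep g, h M (Nat.lt_succ_self M), ih (fun m hm => h m (hm.trans (Nat.lt_succ_self M)))]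
    group

end misc

section bridge

lemma inducedHom_Om {E B : Type} [TopologicalSpace E] [TopologicalSpace B]
    (f : C(E, B)) (e : E) (p : Path e e) :
    FundamentalGroup.inducedHom f e (Om p) = Om (p.map f.continuous) := by
  apply Aut_ext
  show (πₘ (TopCat.ofHom f)).map (mor p) = mor (p.map f.continuous)
  rfl

end bridge

end VK

/-- **Seifert–van Kampen with surjective edge maps.**  If `X = A₁ ∪ A₂` with `A₁`, `A₂` and
`A₁ ∩ A₂` open and path-connected, and both inclusion-induced maps
`jₖ : π₁(A₁ ∩ A₂) → π₁(Aₖ)` are surjective, then `π₁(X) ≅ π₁(A₁) / j₁(ker j₂)`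
(expressed as: there is a surjective homomorphism `π₁(A₁) → π₁(X)` with kernel
`j₁(ker j₂)`). -/
theorem pi1_of_union_eq_quot
    {X : Type} [TopologicalSpace X] (A₁ A₂ : Set X)
    (h₁ : IsOpen A₁) (h₂ : IsOpen A₂) (hunion : A₁ ∪ A₂ = Set.univ)
    [PathConnectedSpace A₁] [PathConnectedSpace A₂]
    [PathConnectedSpace (A₁ ∩ A₂ : Set X)]
    (x₀ : X) (hx₀ : x₀ ∈ A₁ ∩ A₂)
    (j₁ : FundamentalGroup (A₁ ∩ A₂ : Set X) ⟨x₀, hx₀⟩ →*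
      FundamentalGroup A₁ ⟨x₀, hx₀.1⟩)
    (j₂ : FundamentalGroup (A₁ ∩ A₂ : Set X) ⟨x₀, hx₀⟩ →*
      FundamentalGroup A₂ ⟨x₀, hx₀.2⟩)
    (hj₁ : j₁ = FundamentalGroup.inducedHom
      ⟨Set.inclusion Set.inter_subset_left, continuous_inclusion Set.inter_subset_left⟩
      ⟨x₀, hx₀⟩)
    (hj₂ : j₂ = FundamentalGroup.inducedHom
      ⟨Set.inclusion Set.inter_subset_right, continuous_inclusion Set.inter_subset_right⟩
      ⟨x₀, hx₀⟩)
    (hsurj₁ : Function.Surjective j₁) (hsurj₂ : Function.Surjective j₂) :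
    ∃ Φ : FundamentalGroup A₁ ⟨x₀, hx₀.1⟩ →* FundamentalGroup X x₀,
      Function.Surjective Φ ∧ Φ.ker = Subgroup.map j₁ j₂.ker := by
  classical
  -- inclusions and the two induced maps to `π₁ X`
  let ι₁ : C((A₁ : Set X), X) := ⟨Subtype.val, continuous_subtype_val⟩
  let ι₂ : C((A₂ : Set X), X) := ⟨Subtype.val, continuous_subtype_val⟩
  let Φ : FundamentalGroup (A₁ : Set X) ⟨x₀, hx₀.1⟩ →* FundamentalGroup X x₀ :=
    FundamentalGroup.inducedHom ι₁ ⟨x₀, hx₀.1⟩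
  let Ψ : FundamentalGroup (A₂ : Set X) ⟨x₀, hx₀.2⟩ →* FundamentalGroup X x₀ :=
    FundamentalGroup.inducedHom ι₂ ⟨x₀, hx₀.2⟩
  have hΦ : ∀ p : Path (⟨x₀, hx₀.1⟩ : (A₁ : Set X)) ⟨x₀, hx₀.1⟩,
      Φ (VK.Om p) = VK.Om (p.map continuous_subtype_val) :=
    fun p => VK.inducedHom_Om ι₁ _ p
  have hΨ : ∀ p : Path (⟨x₀, hx₀.2⟩ : (A₂ : Set X)) ⟨x₀, hx₀.2⟩,
      Ψ (VK.Om p) = VK.Om (p.map continuous_subtype_val) :=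
    fun p => VK.inducedHom_Om ι₂ _ p
  have hj₁Om : ∀ v : Path (⟨x₀, hx₀⟩ : (A₁ ∩ A₂ : Set X)) ⟨x₀, hx₀⟩,
      j₁ (VK.Om v) = VK.Om (v.map (continuous_inclusion Set.inter_subset_left)) := by
    intro v
    rw [hj₁]
    exact VK.inducedHom_Om _ _ v
  have hj₂Om : ∀ v : Path (⟨x₀, hx₀⟩ : (A₁ ∩ A₂ : Set X)) ⟨x₀, hx₀⟩,
      j₂ (VK.Om v) = VK.Om (v.map (continuous_inclusion Set.inter_subset_right)) := by
    intro v
    rw [hj₂]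
    exact VK.inducedHom_Om _ _ v
  have hΦj₁ : ∀ v : Path (⟨x₀, hx₀⟩ : (A₁ ∩ A₂ : Set X)) ⟨x₀, hx₀⟩,
      Φ (j₁ (VK.Om v)) = VK.Om (v.map continuous_subtype_val) := by
    intro v
    rw [hj₁Om, hΦ]
    all_goals (first | exact rfl | (congr 1 <;> (ext s; rfl)))
  have hΨj₂ : ∀ v : Path (⟨x₀, hx₀⟩ : (A₁ ∩ A₂ : Set X)) ⟨x₀, hx₀⟩,
      Ψ (j₂ (VK.Om v)) = VK.Om (v.map continuous_subtype_val) := by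
    intro v
    rw [hj₂Om, hΨ]
    all_goals (first | exact rfl | (congr 1 <;> (ext s; rfl)))
  have hcomm : ∀ u, Φ (j₁ u) = Ψ (j₂ u) := by
    intro u
    obtain ⟨v, rfl⟩ := VK.Om_surjective u
    rw [hΦj₁, hΨj₂]
  -- the cover as a `Bool`-indexed family
  let AB : Bool → Set X := fun b => bif b then A₁ else A₂
  have hABopen : ∀ b, IsOpen (AB b) := by intro b; cases b; exacts [h₂, h₁]
  have hx₀B : ∀ b, x₀ ∈ AB b := by intro b; cases b; exacts [hx₀.2, hx₀.1]
  have hcover : ∀ z : X, z ∈ A₁ ∪ A₂ := fun z => by rw [hunion]; trivial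
  -- the system of connecting paths
  obtain ⟨conn, hconn₀, hconn₁, hconn₂, hconnx⟩ :
      ∃ conn : ∀ z : X, Path x₀ z,
        (∀ z, z ∈ A₁ ∩ A₂ → ∀ s, conn z s ∈ A₁ ∩ A₂) ∧
        (∀ z, z ∈ A₁ → ∀ s, conn z s ∈ A₁) ∧
        (∀ z, z ∈ A₂ → ∀ s, conn z s ∈ A₂) ∧
        (∀ s, conn x₀ s = x₀) := by
    refine ⟨fun z =>
      if hz : z = x₀ then (Path.refl x₀).cast rfl hz
      else if h0 : z ∈ A₁ ∩ A₂ then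
        (PathConnectedSpace.somePath (⟨x₀, hx₀⟩ : (A₁ ∩ A₂ : Set X)) ⟨z, h0⟩).map
          continuous_subtype_val
      else if h1 : z ∈ A₁ then
        (PathConnectedSpace.somePath (⟨x₀, hx₀.1⟩ : (A₁ : Set X)) ⟨z, h1⟩).map
          continuous_subtype_val
      else
        (PathConnectedSpace.somePath (⟨x₀, hx₀.2⟩ : (A₂ : Set X))
          ⟨z, (hcover z).resolve_left h1⟩).map continuous_subtype_val, ?_, ?_, ?_, ?_⟩
    · intro z hz s
      dsimp only
      by_cases h : z = x₀
      · rw [dif_pos h]; simp only [Path.cast_coe, Path.refl_apply]; exact hx₀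
      · rw [dif_neg h, dif_pos hz]
        exact Subtype.coe_prop ((PathConnectedSpace.somePath
          (⟨x₀, hx₀⟩ : (A₁ ∩ A₂ : Set X)) ⟨z, hz⟩) s)
    · intro z hz s
      dsimp only
      by_cases h : z = x₀
      · rw [dif_pos h]; simp only [Path.cast_coe, Path.refl_apply]; exact hx₀.1
      · rw [dif_neg h]
        by_cases h0 : z ∈ A₁ ∩ A₂
        · rw [dif_pos h0]
          exact (Subtype.coe_prop ((PathConnectedSpace.somePath
            (⟨x₀, hx₀⟩ : (A₁ ∩ A₂ : Set X)) ⟨z, h0⟩) s)).1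
        · rw [dif_neg h0, dif_pos hz]
          exact Subtype.coe_prop ((PathConnectedSpace.somePath
            (⟨x₀, hx₀.1⟩ : (A₁ : Set X)) ⟨z, hz⟩) s)
    · intro z hz s
      dsimp only
      by_cases h : z = x₀
      · rw [dif_pos h]; simp only [Path.cast_coe, Path.refl_apply]; exact hx₀.2
      · rw [dif_neg h]
        by_cases h0 : z ∈ A₁ ∩ A₂
        · rw [dif_pos h0]
          exact (Subtype.coe_prop ((PathConnectedSpace.somePath
            (⟨x₀, hx₀⟩ : (A₁ ∩ A₂ : Set X)) ⟨z, h0⟩) s)).2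
        · rw [dif_neg h0]
          by_cases h1 : z ∈ A₁
          · exact absurd ⟨h1, hz⟩ h0
          · rw [dif_neg h1]
            exact Subtype.coe_prop ((PathConnectedSpace.somePath
              (⟨x₀, hx₀.2⟩ : (A₂ : Set X)) ⟨z, (hcover z).resolve_left h1⟩) s)
    · intro s
      dsimp only
      rw [dif_pos rfl]
      simp only [Path.cast_coe, Path.refl_apply]
  have hconn_congr : ∀ (z z' : X) (h : z = z') (s : I), conn z s = conn z' s := by
    intro z z' h s; subst h; rfl
  have hconnB : ∀ b (z : X), z ∈ AB b → ∀ s, conn z s ∈ AB b := by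
    intro b; cases b; exacts [hconn₂, hconn₁]
  -- every loop whose image lies in one of the two pieces is in the range of `Φ`
  have hloopin : ∀ (b : Bool) (ℓ : Path x₀ x₀), (∀ s, ℓ s ∈ AB b) → VK.Om ℓ ∈ Φ.range := by
    intro b ℓ h
    cases b
    · -- lies in A₂
      obtain ⟨w, hw⟩ := hsurj₂ (VK.Om (VK.intoSet ℓ h
        (u := (⟨x₀, hx₀.2⟩ : (A₂ : Set X))) (v := ⟨x₀, hx₀.2⟩) rfl rfl))
      obtain ⟨v, rfl⟩ := VK.Om_surjective w
      refine ⟨j₁ (VK.Om v), ?_⟩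
      rw [hcomm, hw, hΨ]
      all_goals (first | exact rfl | (congr 1 <;> (ext s; rfl)))
    · refine ⟨VK.Om (VK.intoSet ℓ h
        (u := (⟨x₀, hx₀.1⟩ : (A₁ : Set X))) (v := ⟨x₀, hx₀.1⟩) rfl rfl), ?_⟩
      rw [hΦ]
      all_goals (first | exact rfl | (congr 1 <;> (ext s; rfl)))
  refine ⟨Φ, ?_, ?_⟩
  · -- surjectivity
    intro g
    suffices h : g ∈ Φ.range by exact h
    obtain ⟨γ, rfl⟩ := VK.Om_surjective g
    have hc1 : ∀ b, IsOpen (⇑γ ⁻¹' (AB b)) :=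
      fun b => (hABopen b).preimage γ.continuous
    have hc2 : Set.univ ⊆ ⋃ b : Bool, ⇑γ ⁻¹' AB b := by
      intro s _
      rcases hcover (γ s) with h | h
      · exact Set.mem_iUnion.2 ⟨true, h⟩
      · exact Set.mem_iUnion.2 ⟨false, h⟩
    obtain ⟨t, ht0, hmono, ⟨N, htN⟩, hsub⟩ :=
      exists_monotone_Icc_subset_open_cover_unitInterval hc1 hc2
    choose k hk using hsub
    have hd0 : ∀ s, conn (γ (t 0)) s = x₀ := by
      intro s
      have hz : γ (t 0) = x₀ := by rw [ht0]; exact γ.source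
      rw [hconn_congr _ _ hz, hconnx]
    have hdN : ∀ s, conn (γ (t N)) s = x₀ := by
      intro s
      have hz : γ (t N) = x₀ := by rw [htN N le_rfl]; exact γ.target
      rw [hconn_congr _ _ hz, hconnx]
    rw [VK.Om_eq_prod_pieces γ t N ht0 (htN N le_rfl) (fun m => conn (γ (t m))) hd0 hdN]
    apply Subgroup.list_prod_mem
    intro x hx
    rw [List.mem_reverse, List.mem_map] at hx
    obtain ⟨m, _, rfl⟩ := hx
    have hmem : ∀ s, (VK.pieceLoop γ t (fun m => conn (γ (t m))) m) s ∈ AB (k m) := by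
      apply VK.trans_mem
      · exact hconnB _ _ (hk m (Set.left_mem_Icc.2 (hmono (Nat.le_succ m))))
      · apply VK.trans_mem
        · intro s
          exact hk m (VK.affCM_mem_Icc (hmono (Nat.le_succ m)) s)
        · apply VK.symm_mem
          exact hconnB _ _ (hk m (Set.right_mem_Icc.2 (hmono (Nat.le_succ m))))
    exact hloopin (k m) _ hmem
  · -- the kernel
    apply le_antisymm
    · -- hard inclusion
      intro a ha
      obtain ⟨ω, rfl⟩ := hsurj₁ a
      have hω : Φ (j₁ ω) = 1 := ha
      set K : Subgroup (FundamentalGroup (A₁ ∩ A₂ : Set X) ⟨x₀, hx₀⟩) := j₁.ker ⊔ j₂.ker with hK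
      haveI hKn : K.Normal := Subgroup.sup_normal _ _
      suffices hωK : ω ∈ K by
        have hmem1 : j₁ ω ∈ Subgroup.map j₁ K := ⟨ω, hωK, rfl⟩
        have hmem2 : Subgroup.map j₁ K = Subgroup.map j₁ j₂.ker := by
          rw [hK, Subgroup.map_sup]
          have h3 : Subgroup.map j₁ j₁.ker = ⊥ := by
            apply le_antisymm _ bot_le
            rintro y ⟨u, hu, rfl⟩
            exact hu
          rw [h3, bot_sup_eq]
        rwa [hmem2] at hmem1
      obtain ⟨w, rfl⟩ := VK.Om_surjective ω
      have h1 : VK.Om (w.map (continuous_subtype_val :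
          Continuous (Subtype.val : (A₁ ∩ A₂ : Set X) → X))) = 1 := by
        rw [← hΦj₁ w]; exact hω
      have h3 : (w.map (continuous_subtype_val :
          Continuous (Subtype.val : (A₁ ∩ A₂ : Set X) → X))).Homotopic (Path.refl x₀) := by
        have hm : VK.mor (w.map (continuous_subtype_val :
            Continuous (Subtype.val : (A₁ ∩ A₂ : Set X) → X))) = VK.mor (Path.refl x₀) := by
          apply VK.Om_eq_iff.1
          rw [h1, VK.Om_refl]
        exact Quotient.exact hm
      obtain ⟨F⟩ := h3
      let Fc : C(I × I, X) := ⟨fun q => F q, F.continuous⟩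
      have hc1 : ∀ b, IsOpen (⇑Fc ⁻¹' (AB b)) := fun b => (hABopen b).preimage Fc.continuous
      have hc2 : Set.univ ⊆ ⋃ b : Bool, ⇑Fc ⁻¹' AB b := by
        intro q _
        rcases hcover (Fc q) with h | h
        · exact Set.mem_iUnion.2 ⟨true, h⟩
        · exact Set.mem_iUnion.2 ⟨false, h⟩
      obtain ⟨t, ht0, hmono, ⟨N, htN⟩, hsq⟩ :=
        exists_monotone_Icc_subset_open_cover_unitInterval_prod_self hc1 hc2
      choose k hk using hsq
      have hmemF : ∀ n m (q : I × I), q.1 ∈ Set.Icc (t n) (t (n+1)) →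
          q.2 ∈ Set.Icc (t m) (t (m+1)) → Fc q ∈ AB (k n m) :=
        fun n m q hq1 hq2 => hk n m (Set.mem_prod.2 ⟨hq1, hq2⟩)
      have hIccl : ∀ n, t n ∈ Set.Icc (t n) (t (n+1)) :=
        fun n => Set.left_mem_Icc.2 (hmono (Nat.le_succ n))
      have hIccr : ∀ n, t (n+1) ∈ Set.Icc (t n) (t (n+1)) :=
        fun n => Set.right_mem_Icc.2 (hmono (Nat.le_succ n))
      -- the quotient group and the class assignment
      let φq := QuotientGroup.mk' K
      have hφq : ∀ u u', u⁻¹ * u' ∈ K → φq u = φq u' := by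
        intro u u' h
        have h2 : φq (u⁻¹ * u') = 1 := by
          rw [← MonoidHom.mem_ker, QuotientGroup.ker_mk']
          exact h
        rw [map_mul, map_inv] at h2
        exact inv_mul_eq_one.1 h2
      have hker₁ : ∀ u u', j₁ u = j₁ u' → φq u = φq u' := by
        intro u u' h
        apply hφq
        refine (le_sup_left : j₁.ker ≤ K) ?_
        rw [MonoidHom.mem_ker, map_mul, map_inv, h, inv_mul_cancel]
      have hker₂ : ∀ u u', j₂ u = j₂ u' → φq u = φq u' := by
        intro u u' h
        apply hφq
        refine (le_sup_right : j₂.ker ≤ K) ?_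
        rw [MonoidHom.mem_ker, map_mul, map_inv, h, inv_mul_cancel]
      let qc : ∀ (b : Bool) (ℓ : Path x₀ x₀), (∀ s, ℓ s ∈ AB b) →
          (FundamentalGroup (A₁ ∩ A₂ : Set X) ⟨x₀, hx₀⟩ ⧸ K) := fun b =>
        Bool.rec
          (fun ℓ h => φq (Function.surjInv hsurj₂ (VK.Om (VK.intoSet ℓ h
            (u := (⟨x₀, hx₀.2⟩ : (A₂ : Set X))) (v := ⟨x₀, hx₀.2⟩) rfl rfl))))
          (fun ℓ h => φq (Function.surjInv hsurj₁ (VK.Om (VK.intoSet ℓ h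
            (u := (⟨x₀, hx₀.1⟩ : (A₁ : Set X))) (v := ⟨x₀, hx₀.1⟩) rfl rfl))))
          b
      have hqc_inter : ∀ (b : Bool) (ℓ : Path x₀ x₀) (hb : ∀ s, ℓ s ∈ AB b)
          (h : ∀ s, ℓ s ∈ A₁ ∩ A₂),
          qc b ℓ hb = φq (VK.Om (VK.intoSet ℓ h (u := (⟨x₀, hx₀⟩ : (A₁ ∩ A₂ : Set X)))
            (v := ⟨x₀, hx₀⟩) rfl rfl)) := by
        intro b ℓ hb h
        cases b
        · apply hker₂
          rw [Function.surjInv_eq hsurj₂, hj₂Om]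
          all_goals (first | exact rfl | (congr 1 <;> (ext s; rfl)))
        · apply hker₁
          rw [Function.surjInv_eq hsurj₁, hj₁Om]
          all_goals (first | exact rfl | (congr 1 <;> (ext s; rfl)))
      have hqc_any : ∀ (b b' : Bool) (ℓ : Path x₀ x₀) (h : ∀ s, ℓ s ∈ AB b)
          (h' : ∀ s, ℓ s ∈ AB b'), qc b ℓ h = qc b' ℓ h' := by
        intro b b' ℓ h h'
        cases b <;> cases b'
        · rfl
        · have h0 : ∀ s, ℓ s ∈ A₁ ∩ A₂ := fun s => ⟨h' s, h s⟩
          rw [hqc_inter false ℓ h h0, hqc_inter true ℓ h' h0]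
        · have h0 : ∀ s, ℓ s ∈ A₁ ∩ A₂ := fun s => ⟨h s, h' s⟩
          rw [hqc_inter true ℓ h h0, hqc_inter false ℓ h' h0]
        · rfl
      have hqc_mul : ∀ (b : Bool) (ℓ ℓ' : Path x₀ x₀) (h : ∀ s, ℓ s ∈ AB b)
          (h' : ∀ s, ℓ' s ∈ AB b),
          qc b (ℓ.trans ℓ') (VK.trans_mem h h') = qc b ℓ' h' * qc b ℓ h := by
        intro b ℓ ℓ' h h'
        cases b
        · rw [show qc false ℓ' h' * qc false ℓ h =
            φq (Function.surjInv hsurj₂ (VK.Om (VK.intoSet ℓ' h'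
              (u := (⟨x₀, hx₀.2⟩ : (A₂ : Set X))) (v := ⟨x₀, hx₀.2⟩) rfl rfl)) *
              Function.surjInv hsurj₂ (VK.Om (VK.intoSet ℓ h
              (u := (⟨x₀, hx₀.2⟩ : (A₂ : Set X))) (v := ⟨x₀, hx₀.2⟩) rfl rfl)))
            from (map_mul φq _ _).symm]
          apply hker₂
          rw [Function.surjInv_eq hsurj₂, map_mul, Function.surjInv_eq hsurj₂,
            Function.surjInv_eq hsurj₂,
            VK.intoSet_trans ℓ ℓ' h h' (u := (⟨x₀, hx₀.2⟩ : (A₂ : Set X)))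
              (v := ⟨x₀, hx₀.2⟩) (e := ⟨x₀, hx₀.2⟩) rfl rfl rfl, VK.Om_trans]
        · rw [show qc true ℓ' h' * qc true ℓ h =
            φq (Function.surjInv hsurj₁ (VK.Om (VK.intoSet ℓ' h'
              (u := (⟨x₀, hx₀.1⟩ : (A₁ : Set X))) (v := ⟨x₀, hx₀.1⟩) rfl rfl)) *
              Function.surjInv hsurj₁ (VK.Om (VK.intoSet ℓ h
              (u := (⟨x₀, hx₀.1⟩ : (A₁ : Set X))) (v := ⟨x₀, hx₀.1⟩) rfl rfl)))
            from (map_mul φq _ _).symm]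
          apply hker₁
          rw [Function.surjInv_eq hsurj₁, map_mul, Function.surjInv_eq hsurj₁,
            Function.surjInv_eq hsurj₁,
            VK.intoSet_trans ℓ ℓ' h h' (u := (⟨x₀, hx₀.1⟩ : (A₁ : Set X)))
              (v := ⟨x₀, hx₀.1⟩) (e := ⟨x₀, hx₀.1⟩) rfl rfl rfl, VK.Om_trans]
      have hqc_homotopic : ∀ (b : Bool) (ℓ ℓ' : Path x₀ x₀) (h : ∀ s, ℓ s ∈ AB b)
          (h' : ∀ s, ℓ' s ∈ AB b),
          (VK.intoSet ℓ h (u := (⟨x₀, hx₀B b⟩ : (AB b : Set X)))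
              (v := ⟨x₀, hx₀B b⟩) rfl rfl).Homotopic
            (VK.intoSet ℓ' h' (u := ⟨x₀, hx₀B b⟩) (v := ⟨x₀, hx₀B b⟩) rfl rfl) →
          qc b ℓ h = qc b ℓ' h' := by
        intro b ℓ ℓ' h h' hh
        cases b
        · apply hker₂
          rw [Function.surjInv_eq hsurj₂, Function.surjInv_eq hsurj₂]
          exact VK.Om_eq_of_homotopic hh
        · apply hker₁
          rw [Function.surjInv_eq hsurj₁, Function.surjInv_eq hsurj₁]
          exact VK.Om_eq_of_homotopic hh
      have hqc_const : ∀ (b : Bool) (ℓ : Path x₀ x₀) (h : ∀ s, ℓ s ∈ AB b),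
          (∀ s, ℓ s = x₀) → qc b ℓ h = 1 := by
        intro b ℓ h hc
        have h0 : ∀ s, ℓ s ∈ A₁ ∩ A₂ := fun s => by rw [hc s]; exact hx₀
        rw [hqc_inter b ℓ h h0]
        have heq : VK.intoSet ℓ h0 (u := (⟨x₀, hx₀⟩ : (A₁ ∩ A₂ : Set X)))
            (v := (⟨x₀, hx₀⟩ : (A₁ ∩ A₂ : Set X))) rfl rfl
            = Path.refl (⟨x₀, hx₀⟩ : (A₁ ∩ A₂ : Set X)) := by
          ext s
          exact hc s
        rw [heq, VK.Om_refl, map_one]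
      -- grid edge paths and loops
      let hE : ∀ n m : ℕ, Path (Fc (t n, t m)) (Fc (t n, t (m+1))) := fun n m =>
        VK.cPath (VK.rowCM Fc (t n)) (t m) (t (m+1)) rfl rfl
      let vE : ∀ n m : ℕ, Path (Fc (t n, t m)) (Fc (t (n+1), t m)) := fun n m =>
        VK.cPath (VK.colCM Fc (t m)) (t n) (t (n+1)) rfl rfl
      let hLoop : ℕ → ℕ → Path x₀ x₀ := fun n m =>
        (conn (Fc (t n, t m))).trans ((hE n m).trans (conn (Fc (t n, t (m+1)))).symm)
      let vLoop : ℕ → ℕ → Path x₀ x₀ := fun n m =>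
        (conn (Fc (t n, t m))).trans ((vE n m).trans (conn (Fc (t (n+1), t m))).symm)
      have hEmem : ∀ n m n', t n ∈ Set.Icc (t n') (t (n'+1)) →
          ∀ s, (hE n m) s ∈ AB (k n' m) := by
        intro n m n' hn s
        show Fc (t n, VK.affCM (t m) (t (m+1)) s) ∈ _
        exact hmemF n' m _ hn (VK.affCM_mem_Icc (hmono (Nat.le_succ m)) s)
      have hvEmem : ∀ n m m', t m ∈ Set.Icc (t m') (t (m'+1)) →
          ∀ s, (vE n m) s ∈ AB (k n m') := by
        intro n m m' hm s
        show Fc (VK.affCM (t n) (t (n+1)) s, t m) ∈ _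
        exact hmemF n m' _ (VK.affCM_mem_Icc (hmono (Nat.le_succ n)) s) hm
      have hvertmem : ∀ n m n' m', t n ∈ Set.Icc (t n') (t (n'+1)) →
          t m ∈ Set.Icc (t m') (t (m'+1)) → Fc (t n, t m) ∈ AB (k n' m') :=
        fun n m n' m' hn hm => hmemF n' m' _ hn hm
      have hhLoopMem : ∀ n m n', t n ∈ Set.Icc (t n') (t (n'+1)) →
          ∀ s, (hLoop n m) s ∈ AB (k n' m) := by
        intro n m n' hn
        exact VK.trans_mem (hconnB _ _ (hvertmem n m n' m hn (hIccl m)))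
          (VK.trans_mem (hEmem n m n' hn)
            (VK.symm_mem (hconnB _ _ (hvertmem n (m+1) n' m hn (hIccr m)))))
      have hvLoopMem : ∀ n m m', t m ∈ Set.Icc (t m') (t (m'+1)) →
          ∀ s, (vLoop n m) s ∈ AB (k n m') := by
        intro n m m' hm
        exact VK.trans_mem (hconnB _ _ (hvertmem n m n m' (hIccl n) hm))
          (VK.trans_mem (hvEmem n m m' hm)
            (VK.symm_mem (hconnB _ _ (hvertmem (n+1) m n m' (hIccr n) hm))))
      -- canonical classes of the edges
      set Hq : ℕ → ℕ → (FundamentalGroup (A₁ ∩ A₂ : Set X) ⟨x₀, hx₀⟩ ⧸ K) :=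
        fun n m => qc (k n m) (hLoop n m) (hhLoopMem n m n (hIccl n)) with hHqdef
      set Vq : ℕ → ℕ → (FundamentalGroup (A₁ ∩ A₂ : Set X) ⟨x₀, hx₀⟩ ⧸ K) :=
        fun n m => qc (k n m) (vLoop n m) (hvLoopMem n m m (hIccl m)) with hVqdef
      -- the square relation
      have hsquare : ∀ n m,
          qc (k n m) ((hLoop n m).trans (vLoop n (m+1)))
            (VK.trans_mem (hhLoopMem n m n (hIccl n)) (hvLoopMem n (m+1) m (hIccr m))) =
          qc (k n m) ((vLoop n m).trans (hLoop (n+1) m))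
            (VK.trans_mem (hvLoopMem n m m (hIccl m)) (hhLoopMem (n+1) m n (hIccr n))) := by
        intro n m
        apply hqc_homotopic
        -- corner membership facts
        have m00 : Fc (t n, t m) ∈ AB (k n m) := hvertmem n m n m (hIccl n) (hIccl m)
        have m01 : Fc (t n, t (m+1)) ∈ AB (k n m) := hvertmem n (m+1) n m (hIccl n) (hIccr m)
        have m10 : Fc (t (n+1), t m) ∈ AB (k n m) := hvertmem (n+1) m n m (hIccr n) (hIccl m)
        have m11 : Fc (t (n+1), t (m+1)) ∈ AB (k n m) := hvertmem (n+1) (m+1) n m (hIccr n) (hIccr m)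
        -- structured corestrictions
        set S : Set X := AB (k n m) with hSdef
        set c00 := VK.intoSet (conn (Fc (t n, t m))) (hconnB _ _ m00)
          (u := (⟨x₀, hx₀B (k n m)⟩ : S)) (v := (⟨Fc (t n, t m), m00⟩ : S)) rfl rfl with hc00
        set c01 := VK.intoSet (conn (Fc (t n, t (m+1)))) (hconnB _ _ m01)
          (u := (⟨x₀, hx₀B (k n m)⟩ : S)) (v := (⟨Fc (t n, t (m+1)), m01⟩ : S)) rfl rfl with hc01
        set c10 := VK.intoSet (conn (Fc (t (n+1), t m))) (hconnB _ _ m10)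
          (u := (⟨x₀, hx₀B (k n m)⟩ : S)) (v := (⟨Fc (t (n+1), t m), m10⟩ : S)) rfl rfl with hc10
        set c11 := VK.intoSet (conn (Fc (t (n+1), t (m+1)))) (hconnB _ _ m11)
          (u := (⟨x₀, hx₀B (k n m)⟩ : S)) (v := (⟨Fc (t (n+1), t (m+1)), m11⟩ : S)) rfl rfl with hc11
        set eB := VK.intoSet (VK.cPath (VK.rowCM Fc (t n)) (t m) (t (m+1)) rfl rfl)
          (hEmem n m n (hIccl n)) (u := (⟨Fc (t n, t m), m00⟩ : S))
          (v := (⟨Fc (t n, t (m+1)), m01⟩ : S)) rfl rfl with heB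
        set eR := VK.intoSet (VK.cPath (VK.colCM Fc (t (m+1))) (t n) (t (n+1)) rfl rfl)
          (hvEmem n (m+1) m (hIccr m)) (u := (⟨Fc (t n, t (m+1)), m01⟩ : S))
          (v := (⟨Fc (t (n+1), t (m+1)), m11⟩ : S)) rfl rfl with heR
        set eL := VK.intoSet (VK.cPath (VK.colCM Fc (t m)) (t n) (t (n+1)) rfl rfl)
          (hvEmem n m m (hIccl m)) (u := (⟨Fc (t n, t m), m00⟩ : S))
          (v := (⟨Fc (t (n+1), t m), m10⟩ : S)) rfl rfl with heL
        set eT := VK.intoSet (VK.cPath (VK.rowCM Fc (t (n+1))) (t m) (t (m+1)) rfl rfl)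
          (hEmem (n+1) m n (hIccr n)) (u := (⟨Fc (t (n+1), t m), m10⟩ : S))
          (v := (⟨Fc (t (n+1), t (m+1)), m11⟩ : S)) rfl rfl with heT
        have hstruct1 : VK.intoSet ((hLoop n m).trans (vLoop n (m+1)))
            (VK.trans_mem (hhLoopMem n m n (hIccl n)) (hvLoopMem n (m+1) m (hIccr m)))
            (u := (⟨x₀, hx₀B (k n m)⟩ : S)) (v := (⟨x₀, hx₀B (k n m)⟩ : S)) rfl rfl =
            (c00.trans (eB.trans c01.symm)).trans (c01.trans (eR.trans c11.symm)) := by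
          ext s
          show ((((conn (Fc (t n, t m))).trans
              ((hE n m).trans (conn (Fc (t n, t (m+1)))).symm)).trans
              ((conn (Fc (t n, t (m+1)))).trans
              ((vE n (m+1)).trans (conn (Fc (t (n+1), t (m+1)))).symm))) s : X) = _
          simp only [Path.trans_apply]
          split_ifs <;> rfl
        have hstruct2 : VK.intoSet ((vLoop n m).trans (hLoop (n+1) m))
            (VK.trans_mem (hvLoopMem n m m (hIccl m)) (hhLoopMem (n+1) m n (hIccr n)))
            (u := (⟨x₀, hx₀B (k n m)⟩ : S)) (v := (⟨x₀, hx₀B (k n m)⟩ : S)) rfl rfl =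
            (c00.trans (eL.trans c10.symm)).trans (c10.trans (eT.trans c11.symm)) := by
          ext s
          show ((((conn (Fc (t n, t m))).trans
              ((vE n m).trans (conn (Fc (t (n+1), t m))).symm)).trans
              ((conn (Fc (t (n+1), t m))).trans
              ((hE (n+1) m).trans (conn (Fc (t (n+1), t (m+1)))).symm))) s : X) = _
          simp only [Path.trans_apply]
          split_ifs <;> rfl
        rw [hstruct1, hstruct2]
        apply VK.conj_homotopic
        rw [heB, heR, heL, heT]
        exact VK.square_homotopic Fc (t n) (t (n+1)) (t m) (t (m+1))
          (hmono (Nat.le_succ n)) (hmono (Nat.le_succ m))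
          (fun q hq1 hq2 => hmemF n m q hq1 hq2) rfl rfl rfl rfl
          (hEmem n m n (hIccl n)) (hvEmem n (m+1) m (hIccr m))
          (hvEmem n m m (hIccl m)) (hEmem (n+1) m n (hIccr n))
      -- trivial boundary columns
      have hVq0 : ∀ n, Vq n 0 = 1 := by
        intro n
        simp only [hVqdef]
        apply hqc_const
        intro s
        have hcol0 : ∀ n', Fc (t n', t 0) = x₀ := by
          intro n'
          show F (t n', t 0) = x₀
          rw [ht0]
          exact F.source _
        show (((conn (Fc (t n, t 0))).trans
            ((vE n 0).trans (conn (Fc (t (n+1), t 0))).symm))) s = x₀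
        rw [Path.trans_apply]
        split_ifs
        · rw [hconn_congr _ _ (hcol0 n), hconnx]
        · rw [Path.trans_apply]
          split_ifs
          · show F (VK.affCM (t n) (t (n+1)) _, t 0) = x₀
            rw [ht0]
            exact F.source _
          · show conn (Fc (t (n+1), t 0)) _ = x₀
            rw [hconn_congr _ _ (hcol0 (n+1)), hconnx]
      have hVqN : ∀ n, Vq n N = 1 := by
        intro n
        simp only [hVqdef]
        apply hqc_const
        intro s
        have hcolN : ∀ n', Fc (t n', t N) = x₀ := by
          intro n'
          show F (t n', t N) = x₀
          rw [htN N le_rfl]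
          exact F.target _
        show (((conn (Fc (t n, t N))).trans
            ((vE n N).trans (conn (Fc (t (n+1), t N))).symm))) s = x₀
        rw [Path.trans_apply]
        split_ifs
        · rw [hconn_congr _ _ (hcolN n), hconnx]
        · rw [Path.trans_apply]
          split_ifs
          · show F (VK.affCM (t n) (t (n+1)) _, t N) = x₀
            rw [htN N le_rfl]
            exact F.target _
          · show conn (Fc (t (n+1), t N)) _ = x₀
            rw [hconn_congr _ _ (hcolN (n+1)), hconnx]
      -- top row is trivial
      have hHqN : ∀ m, Hq N m = 1 := by
        intro m
        simp only [hHqdef]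
        apply hqc_const
        intro s
        have hrowN : ∀ m', Fc (t N, t m') = x₀ := by
          intro m'
          show F (t N, t m') = x₀
          rw [htN N le_rfl]
          exact ContinuousMap.Homotopy.apply_one F.toHomotopy _
        show (((conn (Fc (t N, t m))).trans
            ((hE N m).trans (conn (Fc (t N, t (m+1)))).symm))) s = x₀
        rw [Path.trans_apply]
        split_ifs
        · rw [hconn_congr _ _ (hrowN m), hconnx]
        · rw [Path.trans_apply]
          split_ifs
          · show F (t N, VK.affCM (t m) (t (m+1)) _) = x₀
            rw [htN N le_rfl]
            exact ContinuousMap.Homotopy.apply_one F.toHomotopy _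
          · show conn (Fc (t N, t (m+1))) _ = x₀
            rw [hconn_congr _ _ (hrowN (m+1)), hconnx]
      -- climbing one row
      have hrow : ∀ n, ((List.range N).map (fun m => Hq n m)).reverse.prod =
          ((List.range N).map (fun m => Hq (n+1) m)).reverse.prod := by
        intro n
        have htel := VK.telescope N (fun m => Hq n m) (fun m => Hq (n+1) m)
          (fun m => Vq n m) ?_
        · rw [htel, hVq0 n, hVqN n, inv_one, one_mul, mul_one]
        · intro m _
          have e1 := hqc_mul (k n m) (hLoop n m) (vLoop n (m+1))
            (hhLoopMem n m n (hIccl n)) (hvLoopMem n (m+1) m (hIccr m))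
          have e2 := hqc_mul (k n m) (vLoop n m) (hLoop (n+1) m)
            (hvLoopMem n m m (hIccl m)) (hhLoopMem (n+1) m n (hIccr n))
          have e3 := hsquare n m
          rw [e1, e2] at e3
          rw [hqc_any (k n m) (k n (m+1)) (vLoop n (m+1)) _
              (hvLoopMem n (m+1) (m+1) (hIccl (m+1))),
            hqc_any (k n m) (k (n+1) m) (hLoop (n+1) m) _
              (hhLoopMem (n+1) m (n+1) (hIccl (n+1)))] at e3
          simp only [hHqdef, hVqdef]
          rw [mul_assoc, eq_inv_mul_iff_mul_eq]
          exact e3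
      have hrows : ∀ n, ((List.range N).map (fun m => Hq 0 m)).reverse.prod =
          ((List.range N).map (fun m => Hq n m)).reverse.prod := by
        intro n
        induction n with
        | zero => rfl
        | succ n ih => rw [ih, hrow n]
      have hprodN : ((List.range N).map (fun m => Hq N m)).reverse.prod = 1 := by
        apply List.prod_eq_one
        intro x hx
        rw [List.mem_reverse, List.mem_map] at hx
        obtain ⟨m, _, rfl⟩ := hx
        exact hHqN m
      -- the bottom row computes `φq (Om w)`
      have hwcoe : ∀ sg : I, Fc (t 0, sg) = ((w sg : (A₁ ∩ A₂ : Set X)) : X) := by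
        intro sg
        show F (t 0, sg) = _
        rw [ht0]
        exact ContinuousMap.Homotopy.apply_zero F.toHomotopy sg
      have hz0mem : ∀ m : ℕ, Fc (t 0, t m) ∈ A₁ ∩ A₂ := by
        intro m
        rw [hwcoe (t m)]
        exact Subtype.coe_prop _
      let d0 : ∀ m : ℕ, Path (⟨x₀, hx₀⟩ : (A₁ ∩ A₂ : Set X)) (w (t m)) := fun m =>
        VK.intoSet (conn (Fc (t 0, t m))) (hconn₀ _ (hz0mem m)) rfl (hwcoe (t m)).symm
      have hd00 : ∀ s, d0 0 s = (⟨x₀, hx₀⟩ : (A₁ ∩ A₂ : Set X)) := by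
        intro s
        have hz00 : Fc (t 0, t 0) = x₀ := by
          rw [hwcoe (t 0), show t 0 = 0 from ht0, w.source]
        apply Subtype.ext
        show conn (Fc (t 0, t 0)) s = x₀
        rw [hconn_congr _ _ hz00, hconnx]
      have hd0N : ∀ s, d0 N s = (⟨x₀, hx₀⟩ : (A₁ ∩ A₂ : Set X)) := by
        intro s
        have hz0N : Fc (t 0, t N) = x₀ := by
          rw [hwcoe (t N), show t N = 1 from htN N le_rfl, w.target]
        apply Subtype.ext
        show conn (Fc (t 0, t N)) s = x₀
        rw [hconn_congr _ _ hz0N, hconnx]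
      have hHq0 : ∀ m : ℕ, φq (VK.Om (VK.pieceLoop w t d0 m)) = Hq 0 m := by
        intro m
        have h0m : ∀ s, (hLoop 0 m) s ∈ A₁ ∩ A₂ := by
          apply VK.trans_mem (hconn₀ _ (hz0mem m))
          apply VK.trans_mem
          · intro s
            show Fc (t 0, VK.affCM (t m) (t (m+1)) s) ∈ _
            rw [hwcoe _]
            exact Subtype.coe_prop _
          · exact VK.symm_mem (hconn₀ _ (hz0mem (m+1)))
        simp only [hHqdef]
        rw [hqc_inter (k 0 m) (hLoop 0 m) (hhLoopMem 0 m 0 (hIccl 0)) h0m]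
        congr 1
        congr 1
        ext s
        show ((VK.pieceLoop w t d0 m) s : X) =
          (((conn (Fc (t 0, t m))).trans
            ((hE 0 m).trans (conn (Fc (t 0, t (m+1)))).symm)) s : X)
        show (((d0 m).trans ((VK.cPath w.toContinuousMap (t m) (t (m+1)) rfl rfl).trans
            (d0 (m+1)).symm)) s : X) = _
        simp only [Path.trans_apply]
        split_ifs <;> first | rfl | (exact (hwcoe _).symm)
      have hfinal : φq (VK.Om w) = 1 := by
        rw [VK.Om_eq_prod_pieces w t N ht0 (htN N le_rfl) d0 hd00 hd0N]
        rw [map_list_prod]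
        rw [List.map_reverse, List.map_map]
        have hmapeq : (List.range N).map (⇑φq ∘ fun m => VK.Om (VK.pieceLoop w t d0 m)) =
            (List.range N).map (fun m => Hq 0 m) := by
          apply List.map_congr_left
          intro m _
          exact hHq0 m
        rw [hmapeq, hrows N, hprodN]
      show VK.Om w ∈ K
      rw [← QuotientGroup.ker_mk' K]
      exact MonoidHom.mem_ker.mpr hfinal



    · rintro x ⟨u, hu, rfl⟩
      have hu' : j₂ u = 1 := hu
      rw [MonoidHom.mem_ker, hcomm u, hu', map_one]
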